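/- If probabilities P_j(t) evolve according to the master equation dP_j/dt = Σ_k (w_{kj} P_k − w_{jk} P_j), where the transition rates are Bell's rates w_{jk} = max(0, 2·Im⟨Ψ(t)|Π_k H Π_j|Ψ(t)⟩ / ⟨Ψ(t)|Π_j|Ψ(t)⟩) (with ħ=1), the state |Ψ(t)⟩ satisfies the Schrödinger equation i d|Ψ⟩/dt = H|Ψ⟩, and {Π_j} is a complete family of orthogonal projections (Σ_j Π_j = 1, Π_jΠ_k = δ_{jk}Π_j), then the Born probabilities B_j(t) = ⟨Ψ(t)|Π_j|Ψ(t)⟩ satisfy the same master equation: dB_j/dt = Σ_k (w_{kj} B_k − w_{jk} B_j). -/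

import Mathlib

open scoped InnerProductSpace

/-- Bell's transition rate from the subspace of projection `P` to that of `Q`,
given Hamiltonian `Ham` and universal state `ψ`:
`w = max 0 (2·Im⟨ψ|Q H P|ψ⟩ / ⟨ψ|P|ψ⟩)` (with `ħ = 1`). -/
noncomputable def bellRate {H : Type*} [NormedAddCommGroup H] [InnerProductSpace ℂ H]
    (Ham P Q : H →ₗ[ℂ] H) (ψ : H) : ℝ :=
  max 0 ((2 * (inner ℂ ψ (Q (Ham (P ψ))) : ℂ).im) / (inner ℂ ψ (P ψ) : ℂ).re)

/-- If the state `Ψ(t)` evolves unitarily under the Schrödinger equation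
`i dΨ/dt = H Ψ` and `{Π j}` is a complete family of orthogonal projections, then the Born
probabilities `B j t = ⟨Ψ(t)|Π j|Ψ(t)⟩` satisfy the master equation with Bell's rates:
`dB_j/dt = Σ_k (w_{kj} B_k − w_{jk} B_j)`. -/
theorem born_probabilities_satisfy_bell_master_equation
    {H : Type*} [NormedAddCommGroup H] [InnerProductSpace ℂ H] [FiniteDimensional ℂ H]
    {n : ℕ} (Ham : H →ₗ[ℂ] H) (hHam : LinearMap.adjoint Ham = Ham)
    (Pr : Fin n → (H →ₗ[ℂ] H))
    (hsa : ∀ j, LinearMap.adjoint (Pr j) = Pr j)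
    (horth : ∀ j k, (Pr j) ∘ₗ (Pr k) = if j = k then Pr j else 0)
    (hsum : ∑ j, Pr j = LinearMap.id)
    (Ψ : ℝ → H) (hnorm : ∀ t, ‖Ψ t‖ = 1)
    (hSch : ∀ t, HasDerivAt Ψ ((-Complex.I) • Ham (Ψ t)) t)
    (hpos : ∀ j t, 0 < (inner ℂ (Ψ t) (Pr j (Ψ t)) : ℂ).re) :
    ∀ (j : Fin n) (t : ℝ),
      HasDerivAt (fun s => (inner ℂ (Ψ s) (Pr j (Ψ s)) : ℂ).re)
        (∑ k, (bellRate Ham (Pr k) (Pr j) (Ψ t) * (inner ℂ (Ψ t) (Pr k (Ψ t)) : ℂ).re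
             - bellRate Ham (Pr j) (Pr k) (Ψ t) * (inner ℂ (Ψ t) (Pr j (Ψ t)) : ℂ).re)) t := by
  intro j t
  set ψ := Ψ t with hψ
  -- conjugate symmetry for sandwiched operators
  have key : ∀ (A B : H →ₗ[ℂ] H), LinearMap.adjoint A = A → LinearMap.adjoint B = B →
      (inner ℂ ψ (A (Ham (B ψ))) : ℂ) = starRingEnd ℂ (inner ℂ ψ (B (Ham (A ψ)))) := by
    intro A B hA hB
    calc (inner ℂ ψ (A (Ham (B ψ))) : ℂ)
        = inner ℂ ψ (LinearMap.adjoint A (Ham (B ψ))) := by rw [hA]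
      _ = inner ℂ (A ψ) (Ham (B ψ)) := LinearMap.adjoint_inner_right A _ _
      _ = inner ℂ (A ψ) (LinearMap.adjoint Ham (B ψ)) := by rw [hHam]
      _ = inner ℂ (Ham (A ψ)) (B ψ) := LinearMap.adjoint_inner_right Ham _ _
      _ = inner ℂ (Ham (A ψ)) (LinearMap.adjoint B (ψ)) := by rw [hB]
      _ = inner ℂ (B (Ham (A ψ))) ψ := LinearMap.adjoint_inner_right B _ _
      _ = starRingEnd ℂ (inner ℂ ψ (B (Ham (A ψ)))) := (inner_conj_symm _ _).symm
  -- the derivative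
  have hderivPsi := hSch t
  have hPj : HasDerivAt (fun s => Pr j (Ψ s)) (Pr j ((-Complex.I) • Ham ψ)) t := by
    exact (((Pr j).toContinuousLinearMap.restrictScalars ℝ).hasFDerivAt.comp_hasDerivAt t
      hderivPsi)
  have hinner : HasDerivAt (fun s => (inner ℂ (Ψ s) (Pr j (Ψ s)) : ℂ))
      ((inner ℂ ψ (Pr j ((-Complex.I) • Ham ψ)) : ℂ)
        + inner ℂ ((-Complex.I) • Ham ψ) (Pr j ψ)) t :=
    HasDerivAt.inner ℂ hderivPsi hPj
  have hre : HasDerivAt (fun s => (inner ℂ (Ψ s) (Pr j (Ψ s)) : ℂ).re)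
      (((inner ℂ ψ (Pr j ((-Complex.I) • Ham ψ)) : ℂ)
        + inner ℂ ((-Complex.I) • Ham ψ) (Pr j ψ)).re) t :=
    (Complex.reCLM.hasFDerivAt.comp_hasDerivAt t hinner)
  -- identify derivative value
  have hval : (((inner ℂ ψ (Pr j ((-Complex.I) • Ham ψ)) : ℂ)
        + inner ℂ ((-Complex.I) • Ham ψ) (Pr j ψ)).re)
      = 2 * (inner ℂ ψ (Pr j (Ham ψ)) : ℂ).im := by
    have h1 : (inner ℂ ψ (Pr j ((-Complex.I) • Ham ψ)) : ℂ)
        = (-Complex.I) * inner ℂ ψ (Pr j (Ham ψ)) := by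
      rw [map_smul, inner_smul_right]
    have h2 : (inner ℂ ((-Complex.I) • Ham ψ) (Pr j ψ) : ℂ)
        = Complex.I * inner ℂ (Ham ψ) (Pr j ψ) := by
      rw [inner_smul_left]; simp
    have h3 : (inner ℂ (Ham ψ) (Pr j ψ) : ℂ) = starRingEnd ℂ (inner ℂ ψ (Pr j (Ham ψ))) := by
      calc (inner ℂ (Ham ψ) (Pr j ψ) : ℂ)
          = inner ℂ (Ham ψ) (LinearMap.adjoint (Pr j) ψ) := by rw [hsa j]
        _ = inner ℂ (Pr j (Ham ψ)) ψ := LinearMap.adjoint_inner_right (Pr j) _ _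
        _ = starRingEnd ℂ (inner ℂ ψ (Pr j (Ham ψ))) := (inner_conj_symm _ _).symm
    rw [h1, h2, h3]
    set z : ℂ := inner ℂ ψ (Pr j (Ham ψ))
    simp [Complex.add_re, Complex.mul_re, Complex.conj_re, Complex.conj_im]
    ring
  -- identify the sum
  have hsumval : (∑ k, (bellRate Ham (Pr k) (Pr j) ψ * (inner ℂ ψ (Pr k ψ) : ℂ).re
             - bellRate Ham (Pr j) (Pr k) ψ * (inner ℂ ψ (Pr j ψ) : ℂ).re))
      = 2 * (inner ℂ ψ (Pr j (Ham ψ)) : ℂ).im := by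
    have term : ∀ k, bellRate Ham (Pr k) (Pr j) ψ * (inner ℂ ψ (Pr k ψ) : ℂ).re
             - bellRate Ham (Pr j) (Pr k) ψ * (inner ℂ ψ (Pr j ψ) : ℂ).re
             = 2 * (inner ℂ ψ (Pr j (Ham (Pr k ψ))) : ℂ).im := by
      intro k
      have hBk := hpos k t
      have hBj := hpos j t
      have e1 : bellRate Ham (Pr k) (Pr j) ψ * (inner ℂ ψ (Pr k ψ) : ℂ).re
          = max 0 (2 * (inner ℂ ψ (Pr j (Ham (Pr k ψ))) : ℂ).im) := by
        unfold bellRate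
        rw [max_mul_of_nonneg _ _ (le_of_lt hBk), zero_mul,
          div_mul_cancel₀ _ (ne_of_gt hBk)]
      have e2 : bellRate Ham (Pr j) (Pr k) ψ * (inner ℂ ψ (Pr j ψ) : ℂ).re
          = max 0 (-(2 * (inner ℂ ψ (Pr j (Ham (Pr k ψ))) : ℂ).im)) := by
        unfold bellRate
        rw [max_mul_of_nonneg _ _ (le_of_lt hBj), zero_mul,
          div_mul_cancel₀ _ (ne_of_gt hBj), key (Pr k) (Pr j) (hsa k) (hsa j)]
        rw [Complex.conj_im]
        ring_nf
      rw [e1, e2]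
      rcases le_total 0 (2 * (inner ℂ ψ (Pr j (Ham (Pr k ψ))) : ℂ).im) with h | h
      · rw [max_eq_right h, max_eq_left (by linarith)]; ring
      · rw [max_eq_left h, max_eq_right (by linarith)]; ring
    rw [Finset.sum_congr rfl (fun k _ => term k)]
    have hcompl : (∑ k, Pr k ψ) = ψ := by
      have := congrArg (fun (L : H →ₗ[ℂ] H) => L ψ) hsum
      simpa using this
    have hcsum : (∑ k, (inner ℂ ψ (Pr j (Ham (Pr k ψ))) : ℂ))
        = (inner ℂ ψ (Pr j (Ham ψ)) : ℂ) := by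
      rw [← inner_sum, ← map_sum, ← map_sum, hcompl]
    calc (∑ k, (2 * (inner ℂ ψ (Pr j (Ham (Pr k ψ))) : ℂ).im))
        = 2 * (∑ k, (inner ℂ ψ (Pr j (Ham (Pr k ψ))) : ℂ)).im := by
          rw [Complex.im_sum, Finset.mul_sum]
      _ = 2 * (inner ℂ ψ (Pr j (Ham ψ)) : ℂ).im := by rw [hcsum]
  rw [hψ] at hsumval ⊢
  rw [hsumval, ← hval]
  exact hre
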